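/- Let d, n ≥ 1 and θ₀ = 2π/(n+1). For k ∈ {0,1,…,n}^d let |φ_k⟩ = (1/√d)Σ_{i=1}^d e^{iθ₀k_i}|i⟩. Then the uniform mixture of n-fold tensor powers of these multi-phase states is an exact design on the symmetric subspace: (1/(n+1)^d) Σ_{k∈{0,…,n}^d} (|φ_k⟩⟨φ_k|)^{⊗n} = Σ_α (n!/(d^n α!)) |α⟩⟨α|, where the sum runs over all occupation vectors α ∈ ℕ^d with Σ_i α_i = n and α! = α_1!⋯α_d!. -/

import Mathlib

open Matrix MeasureTheory
open scoped Kronecker ComplexOrder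

noncomputable section

/-- The positive semidefinite square root of a matrix (junk value `0` if not PSD). -/
def matSqrt {ι : Type*} [Fintype ι] [DecidableEq ι] (A : Matrix ι ι ℂ) : Matrix ι ι ℂ :=
  open Classical in if h : A.PosSemidef then
    (h.1.eigenvectorUnitary : Matrix ι ι ℂ) *
      diagonal ((↑) ∘ (Real.sqrt ∘ h.1.eigenvalues)) *
      (star h.1.eigenvectorUnitary : Matrix ι ι ℂ) else 0

/-- The matrix absolute value `|X| = √(XᴴX)`. -/
def matAbs {ι : Type*} [Fintype ι] [DecidableEq ι] (X : Matrix ι ι ℂ) : Matrix ι ι ℂ :=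
  matSqrt (Xᴴ * X)

/-- Uhlmann fidelity `F(ρ,σ) = (Tr|√ρ√σ|)²`. -/
def fid {ι : Type*} [Fintype ι] [DecidableEq ι] (ρ σ : Matrix ι ι ℂ) : ℝ :=
  ((matAbs (matSqrt ρ * matSqrt σ)).trace).re ^ 2

/-- A density matrix: positive semidefinite with unit trace. -/
def IsDensity {ι : Type*} [Fintype ι] [DecidableEq ι] (ρ : Matrix ι ι ℂ) : Prop :=
  ρ.PosSemidef ∧ ρ.trace = 1

/-- The rank-one projector `|ψ⟩⟨ψ|`. -/
def ketbra {ι : Type*} (ψ : ι → ℂ) : Matrix ι ι ℂ := Matrix.vecMulVec ψ (star ψ)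

/-- The `l`-fold tensor power of a matrix on `ℂ^d`, acting on `(ℂ^d)^{⊗l}`. -/
def tpow {d : ℕ} (M : Matrix (Fin d) (Fin d) ℂ) (l : ℕ) :
    Matrix (Fin l → Fin d) (Fin l → Fin d) ℂ :=
  Matrix.of fun f g => ∏ i, M (f i) (g i)

/-- Loewner order: `A ⪯ B` iff `B - A` is positive semidefinite. -/
def loewnerLE {ι : Type*} [Fintype ι] (A B : Matrix ι ι ℂ) : Prop := (B - A).PosSemidef

/-- Projector onto the symmetric subspace of `(ℂ^d)^{⊗l}`:
`(1/l!) Σ_{π ∈ S_l} U_π` where `U_π` permutes the tensor factors. -/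
def symProj (d l : ℕ) : Matrix (Fin l → Fin d) (Fin l → Fin d) ℂ :=
  (l.factorial : ℂ)⁻¹ •
    ∑ π : Equiv.Perm (Fin l), Matrix.of fun f g => if f = (fun i => g (π i)) then (1 : ℂ) else 0


/-- Occupation numbers of a product basis index `f` of `(ℂ^d)^{⊗l}`. -/
def occ {d l : ℕ} (f : Fin l → Fin d) : Fin d → ℕ :=
  fun i => (Finset.univ.filter fun j => f j = i).card

/-- Normalized occupation-number basis vector `|α⟩` of the symmetric subspace:
the normalized symmetrization of the product vector with `α i` factors `|i⟩`. -/
def occKet (d l : ℕ) (α : Fin d → ℕ) : (Fin l → Fin d) → ℂ := fun f =>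
  if occ f = α then
    ((Real.sqrt ((∏ i, ((α i).factorial : ℝ)) / (l.factorial : ℝ)) : ℝ) : ℂ) else 0

/-- Multi-phase state `|φ_θ⟩ = (1/√d) Σᵢ e^{iθᵢ}|i⟩`. -/
def phaseState (d : ℕ) (θ : Fin d → ℝ) : Fin d → ℂ :=
  fun i => ((Real.sqrt d : ℝ) : ℂ)⁻¹ * Complex.exp (Complex.I * (θ i : ℂ))

/-- Discretized multi-phase state `|φ_k⟩` with phases multiples of `θ₀ = 2π/(n+1)`. -/
def phaseKet (d n : ℕ) (k : Fin d → Fin (n + 1)) : Fin d → ℂ :=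
  phaseState d (fun i => 2 * Real.pi / (n + 1) * (k i : ℕ))


-- auxiliary lemmas
lemma occ_le {d n : ℕ} (f : Fin n → Fin d) (i : Fin d) : occ f i ≤ n := by
  simpa [occ] using (Finset.card_filter_le Finset.univ (fun j => f j = i)).trans_eq (by simp)

lemma sum_occ {d n : ℕ} (f : Fin n → Fin d) : ∑ i, occ f i = n := by
  have := Finset.card_eq_sum_card_fiberwise (fun j (_ : j ∈ Finset.univ) => Finset.mem_univ (f j))
  simpa [occ] using this.symm

lemma prod_comp_pow_occ {d n : ℕ} (f : Fin n → Fin d) (M : Fin d → ℂ) :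
    ∏ j : Fin n, M (f j) = ∏ i : Fin d, M i ^ occ f i := by
  rw [← Finset.prod_fiberwise_of_maps_to' (fun j (_ : j ∈ Finset.univ) => Finset.mem_univ (f j)) M]
  exact Finset.prod_congr rfl fun i _ => by rw [Finset.prod_const]; rfl

lemma geom_aux {n : ℕ} (c : ℂ) (h1 : c ^ (n+1) = 1) :
    ∑ m : Fin (n+1), c ^ (m : ℕ) = if c = 1 then ((n : ℂ) + 1) else 0 := by
  rw [Fin.sum_univ_eq_sum_range]
  split_ifs with h
  · simp [h]
  · rw [geom_sum_eq h, h1]; simp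

lemma omega_zpow_eq_one_iff {n : ℕ} (a : ℤ) :
    Complex.exp (2 * Real.pi * Complex.I / ((n : ℂ) + 1)) ^ a = 1 ↔ ((n : ℤ) + 1) ∣ a := by
  have h := (Complex.isPrimitiveRoot_exp (n+1) (Nat.succ_ne_zero n)).zpow_eq_one_iff_dvd a
  push_cast at h ⊢
  exact h

lemma phaseKet_eq (d n : ℕ) (k : Fin d → Fin (n+1)) (i : Fin d) :
    phaseKet d n k i = ((Real.sqrt d : ℝ) : ℂ)⁻¹ *
      Complex.exp (2 * Real.pi * Complex.I / ((n : ℂ) + 1)) ^ (k i : ℕ) := by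
  unfold phaseKet phaseState
  rw [← Complex.exp_nat_mul]
  congr 1
  push_cast
  ring

lemma lhs_entry (d n : ℕ) (f g : Fin n → Fin d) :
    ∑ k : Fin d → Fin (n + 1), tpow (ketbra (phaseKet d n k)) n f g
      = if occ f = occ g then ((n : ℂ) + 1) ^ d * ((d : ℂ) ^ n)⁻¹ else 0 := by
  set ω : ℂ := Complex.exp (2 * Real.pi * Complex.I / ((n : ℂ) + 1)) with hω
  have hn1 : ((n : ℂ) + 1) ≠ 0 := by
    have h := (Nat.cast_ne_zero (R := ℂ)).mpr (Nat.succ_ne_zero n)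
    push_cast at h
    exact h
  have hω0 : ω ≠ 0 := Complex.exp_ne_zero _
  have hω1 : ω ^ (n + 1) = 1 := by
    rw [hω, ← Complex.exp_nat_mul]
    push_cast
    rw [show ((n : ℂ) + 1) * (2 * Real.pi * Complex.I / ((n : ℂ) + 1))
        = 2 * Real.pi * Complex.I by field_simp]
    exact Complex.exp_two_pi_mul_I
  have hstar : star ω = ω⁻¹ := by
    rw [hω, Complex.star_def, ← Complex.exp_conj, ← Complex.exp_neg]
    congr 1
    simp [map_div₀, Complex.conj_I, map_ofNat]
    ring
  have hsqrt : (((Real.sqrt d : ℝ) : ℂ)⁻¹) * (((Real.sqrt d : ℝ) : ℂ)⁻¹) = ((d : ℂ))⁻¹ := by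
    rw [← mul_inv, ← Complex.ofReal_mul, Real.mul_self_sqrt (Nat.cast_nonneg d)]
    norm_num
  -- per-i factor
  set c : Fin d → ℂ := fun i => ω ^ occ f i * (ω⁻¹) ^ occ g i with hc
  have hc1 : ∀ i, c i ^ (n + 1) = 1 := by
    intro i
    rw [hc]
    simp only [mul_pow, ← pow_mul, inv_pow]
    rw [mul_comm (occ f i), mul_comm (occ g i), pow_mul, pow_mul, hω1]
    simp
  have hceq : ∀ i, c i = 1 ↔ occ f i = occ g i := by
    intro i
    have hz : c i = ω ^ ((occ f i : ℤ) - (occ g i : ℤ)) := by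
      rw [zpow_sub₀ hω0, zpow_natCast, zpow_natCast, div_eq_mul_inv, ← inv_pow]
    rw [hz, hω, omega_zpow_eq_one_iff]
    constructor
    · intro hdvd
      have hb : |(occ f i : ℤ) - (occ g i : ℤ)| < (n : ℤ) + 1 := by
        rw [abs_sub_lt_iff]
        have := occ_le f i; have := occ_le g i
        omega
      have := Int.eq_zero_of_abs_lt_dvd hdvd hb
      omega
    · intro hEq
      rw [hEq]
      simp
  have hterm : ∀ k : Fin d → Fin (n + 1), tpow (ketbra (phaseKet d n k)) n f g
      = ((d : ℂ) ^ n)⁻¹ * ∏ i, (c i) ^ (k i : ℕ) := by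
    intro k
    show (∏ j, ketbra (phaseKet d n k) (f j) (g j)) = _
    have h1 : ∀ j, ketbra (phaseKet d n k) (f j) (g j)
        = (((Real.sqrt d : ℝ) : ℂ)⁻¹ * ((Real.sqrt d : ℝ) : ℂ)⁻¹)
          * (ω ^ (k (f j) : ℕ) * (ω⁻¹) ^ (k (g j) : ℕ)) := by
      intro j
      rw [ketbra, Matrix.vecMulVec_apply, Pi.star_apply, phaseKet_eq, phaseKet_eq]
      rw [star_mul', star_pow, hstar, star_inv₀, Complex.star_def, Complex.conj_ofReal]
      ring
    rw [Finset.prod_congr rfl fun j _ => h1 j, Finset.prod_mul_distrib, Finset.prod_const,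
      Finset.card_univ, Fintype.card_fin, hsqrt, inv_pow]
    congr 1
    rw [Finset.prod_mul_distrib,
      prod_comp_pow_occ f (fun i => ω ^ (k i : ℕ)),
      prod_comp_pow_occ g (fun i => (ω⁻¹) ^ (k i : ℕ)),
      ← Finset.prod_mul_distrib]
    refine Finset.prod_congr rfl fun i _ => ?_
    rw [hc]
    simp only [mul_pow, ← pow_mul]
    rw [mul_comm (occ f i) (k i : ℕ), mul_comm (occ g i) (k i : ℕ)]
  rw [Finset.sum_congr rfl fun k _ => hterm k, ← Finset.mul_sum, ← Fintype.prod_sum (fun (i : Fin d) (m : Fin (n+1)) => c i ^ (m : ℕ))]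
  rw [Finset.prod_congr rfl fun i _ => geom_aux (c i) (hc1 i)]
  by_cases h : occ f = occ g
  · rw [if_pos h]
    rw [Finset.prod_congr rfl fun i _ => if_pos ((hceq i).mpr (congrFun h i))]
    rw [Finset.prod_const, Finset.card_univ, Fintype.card_fin]
    ring
  · rw [if_neg h]
    obtain ⟨i, hi⟩ : ∃ i, occ f i ≠ occ g i := by
      by_contra hcon
      push_neg at hcon
      exact h (funext hcon)
    rw [Finset.prod_eq_zero (Finset.mem_univ i)
      (by rw [if_neg (fun hc' => hi ((hceq i).mp hc'))])]
    ring

lemma rhs_entry (d n : ℕ) (hd : 1 ≤ d) (f g : Fin n → Fin d) :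
    ∑ α ∈ Finset.univ.filter (fun α : Fin d → Fin (n + 1) => ∑ i, (α i : ℕ) = n),
        ((n.factorial : ℂ) / ((d : ℂ) ^ n * ∏ i, ((α i : ℕ).factorial : ℂ))) *
          (occKet d n (fun i => (α i : ℕ)) f * star (occKet d n (fun i => (α i : ℕ)) g))
      = if occ f = occ g then ((d : ℂ) ^ n)⁻¹ else 0 := by
  by_cases h : occ f = occ g
  · rw [if_pos h]
    set α₀ : Fin d → Fin (n + 1) := fun i => ⟨occ f i, Nat.lt_succ_of_le (occ_le f i)⟩ with hα₀
    have hmem : α₀ ∈ Finset.univ.filter (fun α : Fin d → Fin (n + 1) => ∑ i, (α i : ℕ) = n) := by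
      rw [Finset.mem_filter]
      exact ⟨Finset.mem_univ _, by simp [hα₀, sum_occ]⟩
    rw [Finset.sum_eq_single_of_mem α₀ hmem ?_]
    · have hP' : (0 : ℝ) ≤ (∏ i, ((occ f i).factorial : ℝ)) / (n.factorial : ℝ) := by
        positivity
      have hg : occ g = occ f := h.symm
      simp only [hα₀, Fin.val_mk, occKet, hg, eq_self_iff_true, if_true]
      rw [Complex.star_def, Complex.conj_ofReal, ← Complex.ofReal_mul, Real.mul_self_sqrt hP']
      have hPne : (∏ i, ((occ f i).factorial : ℂ)) ≠ 0 := by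
        apply Finset.prod_ne_zero_iff.mpr
        intro i _
        exact_mod_cast Nat.cast_ne_zero.mpr (Nat.factorial_ne_zero _)
      have hNne : ((n.factorial : ℂ)) ≠ 0 := Nat.cast_ne_zero.mpr (Nat.factorial_ne_zero _)
      have hDne : ((d : ℂ) ^ n) ≠ 0 := pow_ne_zero _ (Nat.cast_ne_zero.mpr (by omega))
      push_cast
      field_simp
    · intro β hβ hne
      have : occ f ≠ (fun i => (β i : ℕ)) := by
        intro hEq
        apply hne
        funext i
        exact Fin.ext (congrFun hEq i).symm
      rw [occKet, if_neg (fun hc => this hc)]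
      ring
  · rw [if_neg h]
    apply Finset.sum_eq_zero
    intro α _
    rw [occKet, occKet]
    split_ifs with h1 h2
    · exact absurd (h1.trans h2.symm) h
    · simp
    · simp
    · simp

/-- the uniform mixture of n-fold tensor powers of the discretized
multi-phase states is an exact design on the symmetric subspace. -/
theorem multi_phase_exact_design
    (d n : ℕ) (hd : 1 ≤ d) (hn : 1 ≤ n) :
    ((n + 1 : ℂ) ^ d)⁻¹ • ∑ k : Fin d → Fin (n + 1), tpow (ketbra (phaseKet d n k)) n
      = ∑ α ∈ Finset.univ.filter (fun α : Fin d → Fin (n + 1) => ∑ i, (α i : ℕ) = n),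
          ((n.factorial : ℂ) / ((d : ℂ) ^ n * ∏ i, ((α i : ℕ).factorial : ℂ))) •
            ketbra (occKet d n (fun i => (α i : ℕ))) := by
  ext f g
  simp only [Matrix.smul_apply, Matrix.sum_apply, smul_eq_mul, ketbra, Matrix.vecMulVec_apply,
    Pi.star_apply]
  rw [show (∑ k : Fin d → Fin (n + 1),
      tpow (Matrix.vecMulVec (phaseKet d n k) (star (phaseKet d n k))) n f g)
      = ∑ k : Fin d → Fin (n + 1), tpow (ketbra (phaseKet d n k)) n f g from rfl]
  rw [lhs_entry d n f g, rhs_entry d n hd f g]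
  have hn1 : ((n : ℂ) + 1) ^ d ≠ 0 := by
    apply pow_ne_zero
    have h := (Nat.cast_ne_zero (R := ℂ)).mpr (Nat.succ_ne_zero n)
    push_cast at h
    exact h
  split_ifs with h
  · field_simp
  · ring
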